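/- Suppose R > 0, ε ≥ 0 and β ∈ ℂ. Let w, ψ : ℝ² → ℂ be smooth functions with w = 0 on ∂Ω, satisfying on Ω the equation (1/R)·Δw + R·ψ_θ = β·(w − ε·Δw). Then the integral identity (1/R + β·ε)·‖Δw‖² + R·⟨ψ_θ, Δw⟩ = −β·‖∇w‖² holds. -/

import Mathlib

open MeasureTheory Complex

noncomputable section

/-- Partial derivative with respect to the first (x) variable. -/
def pdx (f : ℝ × ℝ → ℂ) : ℝ × ℝ → ℂ := fun p => deriv (fun x => f (x, p.2)) p.1

/-- Partial derivative with respect to the second (y) variable. -/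
def pdy (f : ℝ × ℝ → ℂ) : ℝ × ℝ → ℂ := fun p => deriv (fun y => f (p.1, y)) p.2

/-- The Laplacian Δf = f_xx + f_yy. -/
def lap (f : ℝ × ℝ → ℂ) : ℝ × ℝ → ℂ := fun p => pdx (pdx f) p + pdy (pdy f) p

/-- The azimuthal derivative f_θ = x f_y − y f_x. -/
def azim (f : ℝ × ℝ → ℂ) : ℝ × ℝ → ℂ :=
  fun p => (p.1 : ℂ) * pdy f p - (p.2 : ℂ) * pdx f p

/-- The open unit disk Ω. -/
def disk : Set (ℝ × ℝ) := {p | p.1 ^ 2 + p.2 ^ 2 < 1}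

/-- The unit circle ∂Ω. -/
def bdry : Set (ℝ × ℝ) := {p | p.1 ^ 2 + p.2 ^ 2 = 1}

/-- The L² inner product ⟨f,g⟩ = ∫_Ω f ⬝ conj g dA. -/
def ip (f g : ℝ × ℝ → ℂ) : ℂ := ∫ p in disk, f p * (starRingEnd ℂ) (g p)

/-- The squared L² norm ‖f‖² over Ω. -/
def nsq (f : ℝ × ℝ → ℂ) : ℝ := ∫ p in disk, ‖f p‖ ^ 2

/-- The squared L² norm of the gradient: ‖∇f‖² = ‖f_x‖² + ‖f_y‖². -/
def gradNsq (f : ℝ × ℝ → ℂ) : ℝ := nsq (pdx f) + nsq (pdy f)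

section AuxLemmas
open Set
lemma hasDerivAt_sliceX (f : ℝ × ℝ → ℂ) (hf : ContDiff ℝ (⊤ : ℕ∞) f) (p : ℝ × ℝ) :
    HasDerivAt (fun x => f (x, p.2)) (fderiv ℝ f p (1, 0)) p.1 := by
  have h1 : HasDerivAt (fun x : ℝ => (x, p.2)) ((1 : ℝ), (0 : ℝ)) p.1 := by
    simpa using (hasDerivAt_id p.1).prodMk (hasDerivAt_const p.1 p.2)
  have := ((hf.differentiable (by simp) (p.1, p.2)).hasFDerivAt).comp_hasDerivAt p.1 h1
  exact this

lemma hasDerivAt_sliceY (f : ℝ × ℝ → ℂ) (hf : ContDiff ℝ (⊤ : ℕ∞) f) (p : ℝ × ℝ) :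
    HasDerivAt (fun y => f (p.1, y)) (fderiv ℝ f p (0, 1)) p.2 := by
  have h1 : HasDerivAt (fun y : ℝ => (p.1, y)) ((0 : ℝ), (1 : ℝ)) p.2 := by
    simpa using (hasDerivAt_const p.2 p.1).prodMk (hasDerivAt_id p.2)
  have := ((hf.differentiable (by simp) (p.1, p.2)).hasFDerivAt).comp_hasDerivAt p.2 h1
  exact this

lemma pdx_eq (f : ℝ × ℝ → ℂ) (hf : ContDiff ℝ (⊤ : ℕ∞) f) (p : ℝ × ℝ) :
    pdx f p = fderiv ℝ f p (1, 0) := (hasDerivAt_sliceX f hf p).deriv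

lemma pdy_eq (f : ℝ × ℝ → ℂ) (hf : ContDiff ℝ (⊤ : ℕ∞) f) (p : ℝ × ℝ) :
    pdy f p = fderiv ℝ f p (0, 1) := (hasDerivAt_sliceY f hf p).deriv

lemma contDiff_pdx (f : ℝ × ℝ → ℂ) (hf : ContDiff ℝ (⊤ : ℕ∞) f) :
    ContDiff ℝ (⊤ : ℕ∞) (pdx f) := by
  have : pdx f = fun p => fderiv ℝ f p (1, 0) := funext (pdx_eq f hf)
  rw [this]
  exact (hf.fderiv_right (by simp)).clm_apply contDiff_const

lemma contDiff_pdy (f : ℝ × ℝ → ℂ) (hf : ContDiff ℝ (⊤ : ℕ∞) f) :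
    ContDiff ℝ (⊤ : ℕ∞) (pdy f) := by
  have : pdy f = fun p => fderiv ℝ f p (0, 1) := funext (pdy_eq f hf)
  rw [this]
  exact (hf.fderiv_right (by simp)).clm_apply contDiff_const

lemma pdx_mul (f g : ℝ × ℝ → ℂ) (hf : ContDiff ℝ (⊤ : ℕ∞) f) (hg : ContDiff ℝ (⊤ : ℕ∞) g)
    (p : ℝ × ℝ) : pdx (fun q => f q * g q) p = pdx f p * g p + f p * pdx g p := by
  have h := ((hasDerivAt_sliceX f hf p).mul (hasDerivAt_sliceX g hg p)).deriv
  rw [pdx, pdx_eq f hf, pdx_eq g hg]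
  exact h

lemma pdy_mul (f g : ℝ × ℝ → ℂ) (hf : ContDiff ℝ (⊤ : ℕ∞) f) (hg : ContDiff ℝ (⊤ : ℕ∞) g)
    (p : ℝ × ℝ) : pdy (fun q => f q * g q) p = pdy f p * g p + f p * pdy g p := by
  have h := ((hasDerivAt_sliceY f hf p).mul (hasDerivAt_sliceY g hg p)).deriv
  rw [pdy, pdy_eq f hf, pdy_eq g hg]
  exact h

lemma pdx_conj (f : ℝ × ℝ → ℂ) (hf : ContDiff ℝ (⊤ : ℕ∞) f) (p : ℝ × ℝ) :
    pdx (fun q => (starRingEnd ℂ) (f q)) p = (starRingEnd ℂ) (pdx f p) := by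
  have h := (hasDerivAt_sliceX f hf p).star
  rw [pdx_eq f hf]
  simp only [starRingEnd_apply]
  exact h.deriv

lemma pdy_conj (f : ℝ × ℝ → ℂ) (hf : ContDiff ℝ (⊤ : ℕ∞) f) (p : ℝ × ℝ) :
    pdy (fun q => (starRingEnd ℂ) (f q)) p = (starRingEnd ℂ) (pdy f p) := by
  have h := (hasDerivAt_sliceY f hf p).star
  rw [pdy_eq f hf]
  simp only [starRingEnd_apply]
  exact h.deriv

lemma contDiff_conj (f : ℝ × ℝ → ℂ) (hf : ContDiff ℝ (⊤ : ℕ∞) f) :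
    ContDiff ℝ (⊤ : ℕ∞) (fun q => (starRingEnd ℂ) (f q)) := by
  have : (fun q => (starRingEnd ℂ) (f q)) = fun q => Complex.conjCLE (f q) := by
    funext q; simp [Complex.conjCLE_apply]
  rw [this]
  exact Complex.conjCLE.toContinuousLinearMap.contDiff.comp hf


/-- The polar map. -/
def Φ : ℝ × ℝ → ℝ × ℝ := fun q => (q.1 * Real.cos q.2, q.1 * Real.sin q.2)

lemma contDiff_Φ : ContDiff ℝ (⊤ : ℕ∞) Φ :=
  (contDiff_fst.mul (Real.contDiff_cos.comp contDiff_snd)).prodMk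
    (contDiff_fst.mul (Real.contDiff_sin.comp contDiff_snd))

/-- `r` times the radial flux, in polar coordinates. -/
def Gfun (F1 F2 : ℝ × ℝ → ℂ) : ℝ × ℝ → ℂ := fun q =>
  (q.1 : ℂ) * ((Real.cos q.2 : ℂ) * F1 (Φ q) + (Real.sin q.2 : ℂ) * F2 (Φ q))

/-- The tangential flux, in polar coordinates. -/
def Hfun (F1 F2 : ℝ × ℝ → ℂ) : ℝ × ℝ → ℂ := fun q =>
  -(Real.sin q.2 : ℂ) * F1 (Φ q) + (Real.cos q.2 : ℂ) * F2 (Φ q)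

lemma contDiff_ofReal_cos_snd : ContDiff ℝ (⊤ : ℕ∞) (fun q : ℝ × ℝ => ((Real.cos q.2 : ℝ) : ℂ)) :=
  Complex.ofRealCLM.contDiff.comp (Real.contDiff_cos.comp contDiff_snd)

lemma contDiff_ofReal_sin_snd : ContDiff ℝ (⊤ : ℕ∞) (fun q : ℝ × ℝ => ((Real.sin q.2 : ℝ) : ℂ)) :=
  Complex.ofRealCLM.contDiff.comp (Real.contDiff_sin.comp contDiff_snd)

lemma contDiff_Gfun (F1 F2 : ℝ × ℝ → ℂ) (h1 : ContDiff ℝ (⊤ : ℕ∞) F1)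
    (h2 : ContDiff ℝ (⊤ : ℕ∞) F2) : ContDiff ℝ (⊤ : ℕ∞) (Gfun F1 F2) :=
  (Complex.ofRealCLM.contDiff.comp contDiff_fst).mul
    ((contDiff_ofReal_cos_snd.mul (h1.comp contDiff_Φ)).add
      (contDiff_ofReal_sin_snd.mul (h2.comp contDiff_Φ)))

lemma contDiff_Hfun (F1 F2 : ℝ × ℝ → ℂ) (h1 : ContDiff ℝ (⊤ : ℕ∞) F1)
    (h2 : ContDiff ℝ (⊤ : ℕ∞) F2) : ContDiff ℝ (⊤ : ℕ∞) (Hfun F1 F2) :=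
  ((contDiff_ofReal_sin_snd.neg).mul (h1.comp contDiff_Φ)).add
    (contDiff_ofReal_cos_snd.mul (h2.comp contDiff_Φ))

/-- radial derivative of `F ∘ Φ`. -/
lemma hasDerivAt_comp_polar_r (F : ℝ × ℝ → ℂ) (hF : ContDiff ℝ (⊤ : ℕ∞) F) (r θ : ℝ) :
    HasDerivAt (fun t : ℝ => F (t * Real.cos θ, t * Real.sin θ))
      ((Real.cos θ : ℂ) * pdx F (Φ (r, θ)) + (Real.sin θ : ℂ) * pdy F (Φ (r, θ))) r := by
  have h1 : HasDerivAt (fun t : ℝ => (t * Real.cos θ, t * Real.sin θ))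
      ((Real.cos θ, Real.sin θ) : ℝ × ℝ) r := by
    simpa using ((hasDerivAt_id r).mul_const (Real.cos θ)).prodMk
      ((hasDerivAt_id r).mul_const (Real.sin θ))
  have h2 := ((hF.differentiable (by simp) (Φ (r, θ))).hasFDerivAt).comp_hasDerivAt r h1
  have h3 : (fderiv ℝ F (Φ (r, θ))) ((Real.cos θ, Real.sin θ) : ℝ × ℝ)
      = (Real.cos θ : ℂ) * pdx F (Φ (r, θ)) + (Real.sin θ : ℂ) * pdy F (Φ (r, θ)) := by
    have : ((Real.cos θ, Real.sin θ) : ℝ × ℝ)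
        = Real.cos θ • ((1 : ℝ), (0 : ℝ)) + Real.sin θ • ((0 : ℝ), (1 : ℝ)) := by
      simp [Prod.ext_iff]
    rw [this, map_add, _root_.map_smul, _root_.map_smul, pdx_eq F hF, pdy_eq F hF,
      Complex.real_smul, Complex.real_smul]
  rw [h3] at h2
  exact h2

/-- angular derivative of `F ∘ Φ`. -/
lemma hasDerivAt_comp_polar_θ (F : ℝ × ℝ → ℂ) (hF : ContDiff ℝ (⊤ : ℕ∞) F) (r θ : ℝ) :
    HasDerivAt (fun t : ℝ => F (r * Real.cos t, r * Real.sin t))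
      (-(r : ℂ) * (Real.sin θ : ℂ) * pdx F (Φ (r, θ))
        + (r : ℂ) * (Real.cos θ : ℂ) * pdy F (Φ (r, θ))) θ := by
  have h1 : HasDerivAt (fun t : ℝ => (r * Real.cos t, r * Real.sin t))
      ((-(r * Real.sin θ), r * Real.cos θ) : ℝ × ℝ) θ := by
    simpa [mul_comm, mul_neg] using ((Real.hasDerivAt_cos θ).const_mul r).prodMk
      ((Real.hasDerivAt_sin θ).const_mul r)
  have h2 := ((hF.differentiable (by simp) (Φ (r, θ))).hasFDerivAt).comp_hasDerivAt θ h1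
  have h3 : (fderiv ℝ F (Φ (r, θ))) ((-(r * Real.sin θ), r * Real.cos θ) : ℝ × ℝ)
      = -(r : ℂ) * (Real.sin θ : ℂ) * pdx F (Φ (r, θ))
        + (r : ℂ) * (Real.cos θ : ℂ) * pdy F (Φ (r, θ)) := by
    have : ((-(r * Real.sin θ), r * Real.cos θ) : ℝ × ℝ)
        = (-(r * Real.sin θ)) • ((1 : ℝ), (0 : ℝ)) + (r * Real.cos θ) • ((0 : ℝ), (1 : ℝ)) := by
      simp [Prod.ext_iff]
    rw [this, map_add, _root_.map_smul, _root_.map_smul, pdx_eq F hF, pdy_eq F hF,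
      Complex.real_smul, Complex.real_smul]
    push_cast
    ring
  rw [h3] at h2
  exact h2

/-- The key pointwise polar-divergence identity. -/
lemma polar_div_identity (F1 F2 : ℝ × ℝ → ℂ) (h1 : ContDiff ℝ (⊤ : ℕ∞) F1)
    (h2 : ContDiff ℝ (⊤ : ℕ∞) F2) (q : ℝ × ℝ) :
    pdx (Gfun F1 F2) q + pdy (Hfun F1 F2) q
      = (q.1 : ℂ) * (pdx F1 (Φ q) + pdy F2 (Φ q)) := by
  obtain ⟨r, θ⟩ := q
  set c := Real.cos θ
  set s := Real.sin θ
  set p := Φ (r, θ)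
  -- derivative of G in r
  have hG : HasDerivAt (fun t : ℝ => Gfun F1 F2 (t, θ))
      ((c : ℂ) * F1 p + (s : ℂ) * F2 p
        + (r : ℂ) * ((c : ℂ) * ((c : ℂ) * pdx F1 p + (s : ℂ) * pdy F1 p)
          + (s : ℂ) * ((c : ℂ) * pdx F2 p + (s : ℂ) * pdy F2 p))) r := by
    have hA : HasDerivAt (fun t : ℝ => ((c : ℂ) * F1 (t * c, t * s) + (s : ℂ) * F2 (t * c, t * s)))
        ((c : ℂ) * ((c : ℂ) * pdx F1 p + (s : ℂ) * pdy F1 p)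
          + (s : ℂ) * ((c : ℂ) * pdx F2 p + (s : ℂ) * pdy F2 p)) r :=
      ((hasDerivAt_comp_polar_r F1 h1 r θ).const_mul (c : ℂ)).add
        ((hasDerivAt_comp_polar_r F2 h2 r θ).const_mul (s : ℂ))
    have hId : HasDerivAt (fun t : ℝ => ((t : ℝ) : ℂ)) 1 r := by
      simpa using (hasDerivAt_id r).ofReal_comp
    have := hId.mul hA
    simp only [one_mul] at this
    convert this using 2
    · rfl
    all_goals rfl
  -- derivative of H in θ
  have hH : HasDerivAt (fun t : ℝ => Hfun F1 F2 (r, t))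
      (-(c : ℂ) * F1 p
        + (-(s : ℂ)) * (-(r : ℂ) * (s : ℂ) * pdx F1 p + (r : ℂ) * (c : ℂ) * pdy F1 p)
        + (-(s : ℂ) * F2 p
          + (c : ℂ) * (-(r : ℂ) * (s : ℂ) * pdx F2 p + (r : ℂ) * (c : ℂ) * pdy F2 p))) θ := by
    have hs : HasDerivAt (fun t : ℝ => -((Real.sin t : ℝ) : ℂ)) (-(c : ℂ)) θ := by
      exact ((Real.hasDerivAt_sin θ).ofReal_comp).neg
    have hc : HasDerivAt (fun t : ℝ => ((Real.cos t : ℝ) : ℂ)) (-(s : ℂ)) θ := by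
      simpa only [Complex.ofReal_neg] using (Real.hasDerivAt_cos θ).ofReal_comp
    have hA := hs.mul (hasDerivAt_comp_polar_θ F1 h1 r θ)
    have hB := hc.mul (hasDerivAt_comp_polar_θ F2 h2 r θ)
    have := hA.add hB
    convert this using 2
    · rfl
    all_goals (simp only [Hfun, Φ, p, c, s, Pi.add_apply, Pi.mul_apply] <;> ring)
  have e1 : pdx (Gfun F1 F2) (r, θ) = _ := hG.deriv
  have e2 : pdy (Hfun F1 F2) (r, θ) = _ := hH.deriv
  have hcs : ((c : ℂ)) ^ 2 + ((s : ℂ)) ^ 2 = 1 := by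
    norm_cast
    exact Real.cos_sq_add_sin_sq θ
  show pdx (Gfun F1 F2) (r, θ) + pdy (Hfun F1 F2) (r, θ)
      = (r : ℂ) * (pdx F1 (Φ (r, θ)) + pdy F2 (Φ (r, θ)))
  rw [e1, e2]
  linear_combination ((r : ℂ) * pdx F1 p + (r : ℂ) * pdy F2 p) * hcs

lemma measurableSet_disk : MeasurableSet disk :=
  (isOpen_lt (by fun_prop) continuous_const).measurableSet

lemma integrableOn_of_continuous {f : ℝ × ℝ → ℂ} (hf : Continuous f) {s : Set (ℝ × ℝ)}
    (hb : Bornology.IsBounded s) : IntegrableOn f s := by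
  obtain ⟨R, hR⟩ := hb.subset_closedBall 0
  exact ((hf.continuousOn).integrableOn_compact (isCompact_closedBall 0 R)).mono_set hR

lemma bounded_disk : Bornology.IsBounded disk := by
  have : disk ⊆ Metric.closedBall 0 2 := by
    intro p hp
    have h1 : p.1 ^ 2 + p.2 ^ 2 < 1 := hp
    simp only [Metric.mem_closedBall, dist_zero_right, Prod.norm_def]
    have hx : |p.1| ≤ 2 := by nlinarith [sq_nonneg p.1, sq_nonneg p.2, abs_nonneg p.1, _root_.sq_abs p.1]
    have hy : |p.2| ≤ 2 := by nlinarith [sq_nonneg p.1, sq_nonneg p.2, abs_nonneg p.2, _root_.sq_abs p.2]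
    simp only [Real.norm_eq_abs, sup_le_iff]
    exact ⟨hx, hy⟩
  exact (Metric.isBounded_closedBall).subset this

/-- FTC in the first variable. -/
lemma integral_pdx_slice (k : ℝ × ℝ → ℂ) (hk : ContDiff ℝ (⊤ : ℕ∞) k) (θ : ℝ) :
    ∫ t in Ioo (0 : ℝ) 1, pdx k (t, θ) = k (1, θ) - k (0, θ) := by
  have h1 : ∫ t in Ioo (0 : ℝ) 1, pdx k (t, θ) = ∫ t in (0 : ℝ)..1, deriv (fun x => k (x, θ)) t := by
    rw [intervalIntegral.integral_of_le zero_le_one, integral_Ioc_eq_integral_Ioo]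
    rfl
  rw [h1]
  apply intervalIntegral.integral_deriv_eq_sub
  · intro x _
    exact ((hk.differentiable (by simp)).comp
      (differentiable_id.prodMk (differentiable_const θ))) x
  · have hc : Continuous (fun t : ℝ => pdx k (t, θ)) :=
      (contDiff_pdx k hk).continuous.comp (continuous_id.prodMk continuous_const)
    exact Continuous.intervalIntegrable hc 0 1

/-- FTC in the second variable. -/
lemma integral_pdy_slice (k : ℝ × ℝ → ℂ) (hk : ContDiff ℝ (⊤ : ℕ∞) k) (r : ℝ) :
    ∫ t in Ioo (-Real.pi) Real.pi, pdy k (r, t) = k (r, Real.pi) - k (r, -Real.pi) := by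
  have h1 : ∫ t in Ioo (-Real.pi) Real.pi, pdy k (r, t)
      = ∫ t in (-Real.pi)..Real.pi, deriv (fun y => k (r, y)) t := by
    rw [intervalIntegral.integral_of_le (by linarith [Real.pi_pos]), integral_Ioc_eq_integral_Ioo]
    rfl
  rw [h1]
  apply intervalIntegral.integral_deriv_eq_sub
  · intro x _
    exact ((hk.differentiable (by simp)).comp
      ((differentiable_const r).prodMk differentiable_id)) x
  · have hc : Continuous (fun t : ℝ => pdy k (r, t)) :=
      (contDiff_pdy k hk).continuous.comp (continuous_const.prodMk continuous_id)
    exact Continuous.intervalIntegrable hc (-Real.pi) Real.pi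

/-- The divergence theorem on the unit disk, for vector fields with vanishing
normal flux on the boundary. -/
theorem divergence_disk (F1 F2 : ℝ × ℝ → ℂ) (h1 : ContDiff ℝ (⊤ : ℕ∞) F1)
    (h2 : ContDiff ℝ (⊤ : ℕ∞) F2)
    (hb : ∀ p ∈ bdry, (p.1 : ℂ) * F1 p + (p.2 : ℂ) * F2 p = 0) :
    ∫ p in disk, (pdx F1 p + pdy F2 p) = 0 := by
  set divF : ℝ × ℝ → ℂ := fun p => pdx F1 p + pdy F2 p with hdivF
  have hdivc : Continuous divF :=
    ((contDiff_pdx F1 h1).continuous).add ((contDiff_pdy F2 h2).continuous)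
  set rect : Set (ℝ × ℝ) := Ioo (0 : ℝ) 1 ×ˢ Ioo (-Real.pi) Real.pi with hrect
  -- Step 1: polar change of variables
  have step1 : ∫ p in disk, divF p = ∫ q in rect, (q.1 : ℂ) • divF (Φ q) := by
    have e0 : ∫ p in disk, divF p = ∫ p, Set.indicator disk divF p := by
      rw [integral_indicator measurableSet_disk]
    rw [e0, ← integral_comp_polarCoord_symm (Set.indicator disk divF)]
    have e1 : ∀ q ∈ polarCoord.target,
        q.1 • Set.indicator disk divF (polarCoord.symm q)
          = Set.indicator {q : ℝ × ℝ | q.1 < 1} (fun q => q.1 • divF (polarCoord.symm q)) q := by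
      rintro ⟨r, θ⟩ hq
      simp only [polarCoord_target, mem_prod, mem_Ioi, mem_Ioo] at hq
      have hmem : polarCoord.symm (r, θ) ∈ disk ↔ r < 1 := by
        simp only [polarCoord_symm_apply, disk, mem_setOf_eq]
        constructor
        · intro h
          nlinarith [Real.sin_sq_add_cos_sq θ, hq.1, sq_nonneg r]
        · intro h
          nlinarith [Real.sin_sq_add_cos_sq θ, hq.1, sq_nonneg r]
      by_cases hr : r < 1
      · rw [Set.indicator_of_mem (hmem.mpr hr), Set.indicator_of_mem (by exact hr)]
      · rw [Set.indicator_of_notMem (fun h => hr (hmem.mp h)),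
          Set.indicator_of_notMem (by exact hr), smul_zero]
    rw [setIntegral_congr_fun polarCoord.open_target.measurableSet e1,
      setIntegral_indicator (by exact measurableSet_lt measurable_fst measurable_const)]
    have e2 : polarCoord.target ∩ {q : ℝ × ℝ | q.1 < 1} = rect := by
      rw [polarCoord_target, hrect]
      ext ⟨r, θ⟩
      simp only [mem_inter_iff, mem_prod, mem_Ioi, mem_Ioo, mem_setOf_eq]
      tauto
    rw [e2]
    apply setIntegral_congr_fun (by measurability)
    intro q _
    simp only [polarCoord_symm_apply, Φ, Complex.real_smul, smul_eq_mul]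
  rw [step1]
  have hGc := contDiff_Gfun F1 F2 h1 h2
  have hHc := contDiff_Hfun F1 F2 h1 h2
  have hrectb : Bornology.IsBounded rect :=
    (Metric.isBounded_Ioo (0 : ℝ) 1).prod (Metric.isBounded_Ioo (-Real.pi) Real.pi)
  have hiG : IntegrableOn (pdx (Gfun F1 F2)) rect :=
    integrableOn_of_continuous (contDiff_pdx _ hGc).continuous hrectb
  have hiH : IntegrableOn (pdy (Hfun F1 F2)) rect :=
    integrableOn_of_continuous (contDiff_pdy _ hHc).continuous hrectb
  have step2 : ∫ q in rect, (q.1 : ℂ) • divF (Φ q)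
      = ∫ q in rect, (pdx (Gfun F1 F2) q + pdy (Hfun F1 F2) q) := by
    apply setIntegral_congr_fun (by measurability)
    intro q _
    show (q.1 : ℂ) • divF (Φ q) = pdx (Gfun F1 F2) q + pdy (Hfun F1 F2) q
    rw [polar_div_identity F1 F2 h1 h2 q, smul_eq_mul]
  rw [step2, integral_add hiG hiH]
  have hGpart : ∫ q in rect, pdx (Gfun F1 F2) q = 0 := by
    rw [hrect, Measure.volume_eq_prod] at hiG ⊢
    simp only [← Measure.prod_restrict, IntegrableOn] at hiG ⊢
    rw [integral_prod_symm _ hiG]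
    have inner0 : ∀ y : ℝ, ∫ x in Ioo (0 : ℝ) 1, pdx (Gfun F1 F2) (x, y) = 0 := by
      intro y
      rw [integral_pdx_slice (Gfun F1 F2) hGc y]
      have hbd : ((Real.cos y, Real.sin y) : ℝ × ℝ) ∈ bdry := by
        simp [bdry, Real.cos_sq_add_sin_sq y]
      have := hb _ hbd
      simp only [Gfun, Φ, Complex.ofReal_one, Complex.ofReal_zero, one_mul, zero_mul,
        mul_one, mul_zero, sub_zero]
      exact this
    simp only [inner0, integral_zero]
  have hHpart : ∫ q in rect, pdy (Hfun F1 F2) q = 0 := by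
    rw [hrect, Measure.volume_eq_prod] at hiH ⊢
    rw [setIntegral_prod _ hiH]
    have inner0 : ∀ x : ℝ, ∫ y in Ioo (-Real.pi) Real.pi, pdy (Hfun F1 F2) (x, y) = 0 := by
      intro x
      rw [integral_pdy_slice (Hfun F1 F2) hHc x]
      simp [Hfun, Φ, Real.sin_pi, Real.cos_pi]
    simp only [inner0, integral_zero]
  rw [hGpart, hHpart, add_zero]


lemma mul_conj_self (z : ℂ) : z * (starRingEnd ℂ) z = ((‖z‖ ^ 2 : ℝ) : ℂ) := by
  rw [Complex.mul_conj]
  norm_cast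
  rw [Complex.normSq_eq_norm_sq]

lemma nsq_cast (f : ℝ × ℝ → ℂ) :
    ((nsq f : ℝ) : ℂ) = ∫ p in disk, f p * (starRingEnd ℂ) (f p) := by
  calc ((nsq f : ℝ) : ℂ) = ∫ p in disk, ((‖f p‖ ^ 2 : ℝ) : ℂ) := by
        rw [nsq]; exact (integral_ofReal (𝕜 := ℂ)).symm
    _ = ∫ p in disk, f p * (starRingEnd ℂ) (f p) :=
        setIntegral_congr_fun measurableSet_disk (fun p _ => (mul_conj_self (f p)).symm)

/-- Green's identity on the disk. -/
lemma green (w : ℝ × ℝ → ℂ) (hw : ContDiff ℝ (⊤ : ℕ∞) w) (hbc : ∀ p ∈ bdry, w p = 0) :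
    ∫ p in disk, w p * (starRingEnd ℂ) (lap w p) = -((gradNsq w : ℝ) : ℂ) := by
  have hwx := contDiff_pdx w hw
  have hwy := contDiff_pdy w hw
  set F1 : ℝ × ℝ → ℂ := fun q => w q * (starRingEnd ℂ) (pdx w q) with hF1
  set F2 : ℝ × ℝ → ℂ := fun q => w q * (starRingEnd ℂ) (pdy w q) with hF2
  have hF1c : ContDiff ℝ (⊤ : ℕ∞) F1 := hw.mul (contDiff_conj _ hwx)
  have hF2c : ContDiff ℝ (⊤ : ℕ∞) F2 := hw.mul (contDiff_conj _ hwy)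
  have hbd : ∀ p ∈ bdry, (p.1 : ℂ) * F1 p + (p.2 : ℂ) * F2 p = 0 := by
    intro p hp
    simp [hF1, hF2, hbc p hp]
  have hdiv := divergence_disk F1 F2 hF1c hF2c hbd
  have hpt : ∀ q : ℝ × ℝ, pdx F1 q + pdy F2 q
      = w q * (starRingEnd ℂ) (lap w q)
        + (‖pdx w q‖ ^ 2 : ℝ) + (‖pdy w q‖ ^ 2 : ℝ) := by
    intro q
    rw [hF1, hF2, pdx_mul w _ hw (contDiff_conj _ hwx) q,
      pdy_mul w _ hw (contDiff_conj _ hwy) q,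
      pdx_conj _ hwx q, pdy_conj _ hwy q]
    rw [lap, map_add, (mul_conj_self (pdx w q)).symm, (mul_conj_self (pdy w q)).symm]
    ring
  -- integrability
  have hlapc : Continuous (lap w) :=
    ((contDiff_pdx _ hwx).continuous).add ((contDiff_pdy _ hwy).continuous)
  have hic1 : IntegrableOn (fun q => w q * (starRingEnd ℂ) (lap w q)) disk :=
    integrableOn_of_continuous (hw.continuous.mul (Complex.continuous_conj.comp hlapc))
      bounded_disk
  have hic2 : IntegrableOn (fun q => ((‖pdx w q‖ ^ 2 : ℝ) : ℂ)) disk :=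
    integrableOn_of_continuous (Complex.continuous_ofReal.comp
      ((hwx.continuous.norm).pow 2)) bounded_disk
  have hic3 : IntegrableOn (fun q => ((‖pdy w q‖ ^ 2 : ℝ) : ℂ)) disk :=
    integrableOn_of_continuous (Complex.continuous_ofReal.comp
      ((hwy.continuous.norm).pow 2)) bounded_disk
  have e1 : ∫ p in disk, (pdx F1 p + pdy F2 p)
      = (∫ p in disk, w p * (starRingEnd ℂ) (lap w p))
        + ((nsq (pdx w) : ℝ) : ℂ) + ((nsq (pdy w) : ℝ) : ℂ) := by
    have : ∫ p in disk, (pdx F1 p + pdy F2 p)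
        = ∫ p in disk, (w p * (starRingEnd ℂ) (lap w p)
            + ((‖pdx w p‖ ^ 2 : ℝ) : ℂ) + ((‖pdy w p‖ ^ 2 : ℝ) : ℂ)) := by
      apply setIntegral_congr_fun measurableSet_disk
      intro q _
      exact hpt q
    rw [this]
    have h3 := integral_add (hic1.add hic2) hic3
    simp only [Pi.add_apply] at h3
    rw [h3, integral_add hic1 hic2]
    congr 1
    · congr 1
      rw [nsq]; exact integral_ofReal
    · rw [nsq]; exact integral_ofReal
  rw [e1] at hdiv
  rw [gradNsq]
  push_cast
  linear_combination hdiv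


end AuxLemmas

/-- The first integration-by-parts identity in the proof of Lemma 3.1:
`(1/R + βε)‖Δw‖² + R⟨ψ_θ, Δw⟩ = −β‖∇w‖²`. -/
theorem first_energy_identity (ε R : ℝ) (hε : 0 ≤ ε) (hR : 0 < R) (β : ℂ)
    (w ψ : ℝ × ℝ → ℂ) (hw : ContDiff ℝ (⊤ : ℕ∞) w) (hψ : ContDiff ℝ (⊤ : ℕ∞) ψ)
    (hbc : ∀ p ∈ bdry, w p = 0)
    (heq : ∀ p ∈ disk,
      (1 / (R : ℂ)) * lap w p + (R : ℂ) * azim ψ p = β * (w p - (ε : ℂ) * lap w p)) :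
    (1 / (R : ℂ) + β * (ε : ℂ)) * (nsq (lap w) : ℂ) + (R : ℂ) * ip (azim ψ) (lap w)
      = -β * (gradNsq w : ℂ) := by
  have hlapc : Continuous (lap w) :=
    ((contDiff_pdx _ (contDiff_pdx w hw)).continuous).add
      ((contDiff_pdy _ (contDiff_pdy w hw)).continuous)
  have hconjlapc : Continuous (fun p => (starRingEnd ℂ) (lap w p)) :=
    Complex.continuous_conj.comp hlapc
  have hazimc : Continuous (azim ψ) := by
    apply Continuous.sub
    · exact (Complex.continuous_ofReal.comp continuous_fst).mul
        (contDiff_pdy ψ hψ).continuous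
    · exact (Complex.continuous_ofReal.comp continuous_snd).mul
        (contDiff_pdx ψ hψ).continuous
  have hiA : IntegrableOn (fun p => lap w p * (starRingEnd ℂ) (lap w p)) disk :=
    integrableOn_of_continuous (hlapc.mul hconjlapc) bounded_disk
  have hiB : IntegrableOn (fun p => azim ψ p * (starRingEnd ℂ) (lap w p)) disk :=
    integrableOn_of_continuous (hazimc.mul hconjlapc) bounded_disk
  have hiC : IntegrableOn (fun p => w p * (starRingEnd ℂ) (lap w p)) disk :=
    integrableOn_of_continuous (hw.continuous.mul hconjlapc) bounded_disk
  have key : ∫ p in disk,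
      ((1 / (R : ℂ) + β * (ε : ℂ)) * (lap w p * (starRingEnd ℂ) (lap w p))
        + (R : ℂ) * (azim ψ p * (starRingEnd ℂ) (lap w p)))
      = ∫ p in disk, β * (w p * (starRingEnd ℂ) (lap w p)) := by
    apply setIntegral_congr_fun measurableSet_disk
    intro p hp
    have h := heq p hp
    linear_combination (starRingEnd ℂ) (lap w p) * h
  calc (1 / (R : ℂ) + β * (ε : ℂ)) * (nsq (lap w) : ℂ) + (R : ℂ) * ip (azim ψ) (lap w)
      = (1 / (R : ℂ) + β * (ε : ℂ))
          * (∫ p in disk, lap w p * (starRingEnd ℂ) (lap w p))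
        + (R : ℂ) * (∫ p in disk, azim ψ p * (starRingEnd ℂ) (lap w p)) := by
        rw [nsq_cast, ip]
    _ = (∫ p in disk, (1 / (R : ℂ) + β * (ε : ℂ)) * (lap w p * (starRingEnd ℂ) (lap w p)))
        + ∫ p in disk, (R : ℂ) * (azim ψ p * (starRingEnd ℂ) (lap w p)) := by
        rw [integral_const_mul, integral_const_mul]
    _ = ∫ p in disk,
          ((1 / (R : ℂ) + β * (ε : ℂ)) * (lap w p * (starRingEnd ℂ) (lap w p))
            + (R : ℂ) * (azim ψ p * (starRingEnd ℂ) (lap w p))) :=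
        (integral_add (hiA.const_mul _) (hiB.const_mul _)).symm
    _ = ∫ p in disk, β * (w p * (starRingEnd ℂ) (lap w p)) := key
    _ = β * ∫ p in disk, w p * (starRingEnd ℂ) (lap w p) := integral_const_mul _ _
    _ = β * -((gradNsq w : ℝ) : ℂ) := by rw [green w hw hbc]
    _ = -β * (gradNsq w : ℂ) := by ring
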